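/- Let F be a finite field with q elements and let M, N ∈ GL(n, q) such that M = diag(M₁₁, R) and N = diag(N₁₁, S), where R is the companion matrix of x² + a₁x + a₀ and S is the companion matrix of xˢ + b_{s−1}x^{s−1} + ⋯ + b₀ with s ≥ 2, occupying the last rows and columns. For x ≠ 0 and y in F, let E(x,y) = diag(I_{n−2}, [[x, y],[0, 1]]). Then Trace(E(x,y)⁻¹ M E(x,y) · N) = (1/x)·(−b_{s−2}x² − y² − b_{s−1}xy + a₁y − a₀) + a₀ + b_{s−2} + Trace(MN). -/

import Mathlib

open Matrix

lemma trace_std_mul {m : Type*} [Fintype m] [DecidableEq m] {R : Type*}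
    [NonUnitalNonAssocSemiring R] (i j : m) (c : R) (A : Matrix m m R) :
    Matrix.trace (Matrix.single i j c * A) = c * A j i := by
  rw [Matrix.trace]
  rw [Finset.sum_eq_single i (fun k _ hk => by simp [Matrix.diag, hk]) (by simp)]
  simp [Matrix.diag]

lemma std_mul_mid {m : Type*} [Fintype m] [DecidableEq m] {R : Type*}
    [NonUnitalSemiring R] (i j k l : m) (c d : R) (A : Matrix m m R) :
    Matrix.single i j c * A * Matrix.single k l d = Matrix.single i l (c * A j k * d) := by
  ext a b
  by_cases ha : a = i
  · subst ha
    by_cases hb : b = l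
    · subst hb; simp
    · simp [hb, Ne.symm hb]
  · by_cases hb : b = l
    · subst hb
      rw [Matrix.mul_single_apply_same]
      simp [ha, Ne.symm ha]
    · simp [ha, hb, Ne.symm ha, Ne.symm hb]



/-- Трace formula for `E(x,y)⁻¹ * M * E(x,y) * N` where `M = diag(M₁₁, R)` with `R`
the companion matrix of `x² + a₁x + a₀` and `N = diag(N₁₁, S)` with `S` the companion
matrix of `xˢ + b_{s-1}x^{s-1} + ⋯ + b₀`, `s ≥ 2`, in the bottom-right corners. -/
theorem stmt_16 (F : Type*) [Field F] [Fintype F] [DecidableEq F]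
    (n s : ℕ) (hn : 2 ≤ n) (hs : 2 ≤ s) (hsn : s ≤ n)
    (a₀ a₁ : F) (b : ℕ → F) (x y : F) (hx : x ≠ 0)
    (M N : Matrix (Fin n) (Fin n) F) (hMu : IsUnit M) (hNu : IsUnit N)
    -- M is block diagonal, with the companion matrix of x² + a₁x + a₀
    -- occupying the last two rows and columns:
    (hM : ∀ i j : Fin n, (n - 2 ≤ (i : ℕ) ∨ n - 2 ≤ (j : ℕ)) →
      M i j =
        if (i : ℕ) = n - 2 ∧ (j : ℕ) = n - 2 then 0
        else if (i : ℕ) = n - 1 ∧ (j : ℕ) = n - 2 then 1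
        else if (i : ℕ) = n - 2 ∧ (j : ℕ) = n - 1 then -a₀
        else if (i : ℕ) = n - 1 ∧ (j : ℕ) = n - 1 then -a₁
        else 0)
    -- N is block diagonal, with the companion matrix of
    -- xˢ + b_{s-1}x^{s-1} + ⋯ + b₀ occupying the last s rows and columns:
    (hN : ∀ i j : Fin n, (n - s ≤ (i : ℕ) ∨ n - s ≤ (j : ℕ)) →
      N i j =
        if n - s ≤ (i : ℕ) ∧ n - s ≤ (j : ℕ) then
          (if (j : ℕ) = n - 1 then -(b ((i : ℕ) - (n - s)))
           else if (i : ℕ) = (j : ℕ) + 1 then 1 else 0)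
        else 0)
    (E : Matrix (Fin n) (Fin n) F)
    (hE : E = fun i j : Fin n =>
      if (i : ℕ) = n - 2 ∧ (j : ℕ) = n - 2 then x
      else if (i : ℕ) = n - 2 ∧ (j : ℕ) = n - 1 then y
      else if i = j then 1 else 0) :
    Matrix.trace (E⁻¹ * M * E * N) =
      x⁻¹ * (-(b (s - 2)) * x ^ 2 - y ^ 2 - b (s - 1) * x * y + a₁ * y - a₀) +
        a₀ + b (s - 2) + Matrix.trace (M * N) := by
  set p : Fin n := ⟨n - 2, by omega⟩ with hp
  set q : Fin n := ⟨n - 1, by omega⟩ with hq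
  have hpv : (p : ℕ) = n - 2 := rfl
  have hqv : (q : ℕ) = n - 1 := rfl
  have hpq : p ≠ q := by
    simp only [Fin.ne_iff_vne, hpv, hqv]; omega
  -- entries of M
  have hMpp : M p p = 0 := by rw [hM p p (Or.inl (by omega))]; simp [hpv]
  have hMqp : M q p = 1 := by
    rw [hM q p (Or.inr (by omega))]
    simp only [hpv, hqv]
    have h1 : ¬(n - 1 = n - 2) := by omega
    simp [h1]
  have hMpq : M p q = -a₀ := by
    rw [hM p q (Or.inl (by omega))]
    simp only [hpv, hqv]
    have h1 : ¬(n - 1 = n - 2) := by omega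
    simp [h1]
  have hMqq : M q q = -a₁ := by
    rw [hM q q (Or.inl (by omega))]
    simp only [hpv, hqv]
    have h1 : ¬(n - 1 = n - 2) := by omega
    simp [h1]
  -- columns
  have hMcolp : ∀ k : Fin n, M k p = if k = q then 1 else 0 := by
    intro k
    rw [hM k p (Or.inr (by omega))]
    simp only [hpv]
    by_cases hk : k = q
    · subst hk
      have h1 : ¬((q : ℕ) = n - 2) := by rw [hqv]; omega
      simp [h1, hqv]; omega
    · have hk' : ¬((k : ℕ) = n - 1) := by
        intro h; exact hk (Fin.val_injective (by rw [h, hqv]))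
      have h2 : ¬(n - 2 = n - 1) := by omega
      simp [hk', h2, hk]
  have hNcolp : ∀ k : Fin n, N k p = if k = q then 1 else 0 := by
    intro k
    rw [hN k p (Or.inr (by rw [hpv]; omega))]
    simp only [hpv]
    have h2 : ¬(n - 2 = n - 1) := by omega
    by_cases hk : k = q
    · subst hk
      have h3 : (q : ℕ) = n - 2 + 1 := by rw [hqv]; omega
      simp [h2, h3, hqv, show n - s ≤ n - 1 by omega, show n - s ≤ n - 2 by omega]
      try omega
    · have hk' : ¬((k : ℕ) = n - 2 + 1) := by
        intro h
        exact hk (Fin.val_injective (by rw [h, hqv]; omega))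
      simp [h2, hk', hk]
  have hNpp : N p p = 0 := by rw [hNcolp p, if_neg hpq]
  have hNqp : N q p = 1 := by rw [hNcolp q, if_pos rfl]
  -- N p q, N q q
  have hNpq : N p q = -(b (s - 2)) := by
    rw [hN p q (Or.inl (by rw [hpv]; omega))]
    simp only [hpv, hqv]
    simp [show n - s ≤ n - 2 by omega, show n - s ≤ n - 1 by omega,
      show n - 2 - (n - s) = s - 2 by omega]
  have hNqq : N q q = -(b (s - 1)) := by
    rw [hN q q (Or.inl (by rw [hqv]; omega))]
    simp only [hqv]
    simp [show n - s ≤ n - 1 by omega, show n - 1 - (n - s) = s - 1 by omega]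
  -- products
  have hMNpp : (M * N) p p = -a₀ := by
    rw [Matrix.mul_apply]
    simp only [hNcolp, mul_ite, mul_one, mul_zero, Finset.sum_ite_eq',
      Finset.mem_univ, if_true]
    exact hMpq
  have hMNqp : (M * N) q p = -a₁ := by
    rw [Matrix.mul_apply]
    simp only [hNcolp, mul_ite, mul_one, mul_zero, Finset.sum_ite_eq',
      Finset.mem_univ, if_true]
    exact hMqq
  have hNMpp : (N * M) p p = -(b (s - 2)) := by
    rw [Matrix.mul_apply]
    simp only [hMcolp, mul_ite, mul_one, mul_zero, Finset.sum_ite_eq',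
      Finset.mem_univ, if_true]
    exact hNpq
  have hNMqp : (N * M) q p = -(b (s - 1)) := by
    rw [Matrix.mul_apply]
    simp only [hMcolp, mul_ite, mul_one, mul_zero, Finset.sum_ite_eq',
      Finset.mem_univ, if_true]
    exact hNqq
  -- decomposition of E
  set A := Matrix.single p p (x - 1) with hA
  set B := Matrix.single p q y with hB
  set C := Matrix.single p p (x⁻¹ - 1) with hC
  set D := Matrix.single p q (-(x⁻¹ * y)) with hD
  have hS : E = 1 + (A + B) := by
    rw [hE]
    ext i j
    by_cases hi : i = p
    · subst hi
      by_cases hj : j = p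
      · subst hj
        simp [hA, hB, Matrix.one_apply, hpq, Ne.symm hpq, hpv, hqv]
        try ring
      · by_cases hj2 : j = q
        · subst hj2
          simp [hA, hB, Matrix.one_apply, hpq, hpv, hqv, show ¬((n:ℕ) - 1 = n - 2) by omega]
        · have h1 : ¬((j : ℕ) = n - 2) := fun h => hj (Fin.val_injective h)
          have h2 : ¬((j : ℕ) = n - 1) := fun h => hj2 (Fin.val_injective h)
          simp [hA, hB, Matrix.one_apply, hpv, hqv, h1, h2, Ne.symm hj, Ne.symm hj2,
            show p ≠ j from Ne.symm hj]
    · have h1 : ¬((i : ℕ) = n - 2) := fun h => hi (Fin.val_injective h)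
      simp [hA, hB, Matrix.one_apply, h1, hi, show p ≠ i from Ne.symm hi]
  have hT : E * (1 + (C + D)) = 1 := by
    rw [hS]
    have exp1 : (1 + (A + B)) * (1 + (C + D)) =
        1 + A + B + C + D + (A * C + A * D + B * C + B * D) := by noncomm_ring
    rw [exp1, hA, hB, hC, hD]
    rw [Matrix.single_mul_single_same, Matrix.single_mul_single_same,
      Matrix.single_mul_single_of_ne y p q p (Ne.symm hpq) (x⁻¹ - 1),
      Matrix.single_mul_single_of_ne y p q p (Ne.symm hpq) (-(x⁻¹ * y))]
    ext i j
    by_cases hi : i = p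
    · subst hi
      by_cases hj : j = p
      · subst hj
        simp [Matrix.one_apply, hpq, Ne.symm hpq]
        field_simp
        ring
      · by_cases hj2 : j = q
        · subst hj2
          simp [Matrix.one_apply, hpq, Ne.symm hpq]
          field_simp
          ring
        · simp [Matrix.one_apply, Ne.symm hj, Ne.symm hj2, hj]
    · simp [Matrix.one_apply, Ne.symm hi]
  have hEinv : E⁻¹ = 1 + (C + D) := Matrix.inv_eq_right_inv hT
  rw [hEinv, hS]
  have exp2 : (1 + (C + D)) * M * (1 + (A + B)) * N =
      M * N + C * (M * N) + D * (M * N) + M * (A * N) + M * (B * N) +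
        (C * M * A) * N + (C * M * B) * N + (D * M * A) * N + (D * M * B) * N := by
    noncomm_ring
  rw [exp2]
  simp only [Matrix.trace_add]
  rw [Matrix.trace_mul_comm M (A * N), Matrix.trace_mul_comm M (B * N),
    mul_assoc A N M, mul_assoc B N M]
  rw [hA, hB, hC, hD, std_mul_mid, std_mul_mid, std_mul_mid, std_mul_mid]
  rw [trace_std_mul, trace_std_mul, trace_std_mul, trace_std_mul,
    trace_std_mul, trace_std_mul, trace_std_mul, trace_std_mul]
  rw [hMpp, hMqp, hMNpp, hMNqp, hNMpp, hNMqp, hNpp, hNqp]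
  field_simp
  ring
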